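/- Weak duality for the fourth-order polyhedral problem (PFC) and its dual (PFC*) (toward Theorem 5.2). Let A and E be real m×n matrices, d ∈ ℝ^m, f : ℝⁿ × ℝⁿ → ℝ, S ⊆ ℝⁿ × ℝⁿ, X(t) ⊆ ℝⁿ for t ∈ [0,T]. Let x : ℝ → ℝⁿ be a feasible solution: x three-times differentiable with x'''(t) = x'''(0) + ∫₀ᵗ v(s)ds on [0,T] for an integrable v, A x(t) − E v(t) ≤ d a.e., (x^{(j)}(0), x^{(j)}(T)) ∈ S for j = 0,1,2,3, and x(t) ∈ X(t) for all t. Let λ : [0,T] → ℝ^m satisfy λ(t) ≥ 0 for a.e. t, with t ↦ ⟨d, λ(t)⟩ integrable, and such that η(t) := Eᵀ λ(t) is three-times differentiable with η'''(t) = η'''(0) + ∫₀ᵗ ζ(s)ds on [0,T] for an integrable ζ. Let μ* = (μ₀*, μ₁*) ∈ ℝⁿ × ℝⁿ, let ω : [0,T] → ℝ be integrable and c_f, c_S, c_S^0, c_S^1, c_S^2 ∈ ℝ satisfy: ω(t) ≥ ⟨ξ, ζ(t) − Aᵀ λ(t)⟩ for all ξ ∈ X(t), a.e. t; c_f ≥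 ⟨y₀, η'''(0) + μ₀*⟩ + ⟨y₁, μ₁* − η'''(T)⟩ − f(y₀, y₁) for all y₀, y₁ ∈ ℝⁿ; c_S ≥ −⟨s₀, μ₀*⟩ − ⟨s₁, μ₁*⟩ for all (s₀,s₁) ∈ S; and c_S^j ≥ ⟨s₀, (−1)^{j+1} η^{(j)}(0)⟩ + ⟨s₁, (−1)^j η^{(j)}(T)⟩ for all (s₀,s₁) ∈ S, j = 0,1,2. Then f(x(0), x(T)) ≥ −c_f − ∫₀ᵀ ⟨d, λ(t)⟩dt − ∫₀ᵀ ω(t)dt − c_S − c_S^0 − c_S^1 − c_S^2. -/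

import Mathlib

open MeasureTheory Matrix Set intervalIntegral Asymptotics Filter

/-- A feasible solution of the fourth-order polyhedral problem (PFC), with
`v = x⁽⁴⁾` represented by an integrable function. -/
def IsFeasiblePFC (n m : ℕ) (T : ℝ)
    (A E : Matrix (Fin m) (Fin n) ℝ) (d : Fin m → ℝ)
    (S : Set ((Fin n → ℝ) × (Fin n → ℝ)))
    (X : ℝ → Set (Fin n → ℝ))
    (x v : ℝ → (Fin n → ℝ)) : Prop :=
  (∀ j < 3, Differentiable ℝ (iteratedDeriv j x)) ∧
  IntervalIntegrable v volume 0 T ∧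
  (∀ t ∈ Icc (0:ℝ) T,
      iteratedDeriv 3 x t = iteratedDeriv 3 x 0 + ∫ s in (0:ℝ)..t, v s) ∧
  (∀ᵐ t ∂volume, t ∈ Icc (0:ℝ) T → A *ᵥ x t - E *ᵥ v t ≤ d) ∧
  (∀ j < 4, (iteratedDeriv j x 0, iteratedDeriv j x T) ∈ S) ∧
  (∀ t ∈ Icc (0:ℝ) T, x t ∈ X t)

lemma prim_ibp {T : ℝ} (hT : 0 ≤ T) {u u' w : ℝ → ℝ}
    (hu : ∀ t, HasDerivAt u (u' t) t) (hu' : Continuous u')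
    (hw : IntervalIntegrable w volume 0 T) :
    ∫ t in (0:ℝ)..T, u t * w t
      = u T * (∫ s in (0:ℝ)..T, w s)
        - ∫ t in (0:ℝ)..T, u' t * (∫ s in (0:ℝ)..t, w s) := by
  have hucont : Continuous u := Differentiable.continuous (fun t => (hu t).differentiableAt)
  set w' : ℝ → ℝ := (Set.Ioc (0:ℝ) T).indicator w with hw'def
  have hw'int : Integrable w' volume := hw.1.integrable_indicator measurableSet_Ioc
  have hw'ii : ∀ a b : ℝ, IntervalIntegrable w' volume a b := fun a b => hw'int.intervalIntegrable
  set W : ℝ → ℝ := fun t => ∫ s in (0:ℝ)..t, w' s with hWdef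
  have hWc : Continuous W := intervalIntegral.continuous_primitive hw'ii 0
  have hWrw : ∀ t ∈ Icc (0:ℝ) T, W t = ∫ s in (0:ℝ)..t, w s := by
    intro t ht
    apply intervalIntegral.integral_congr_ae
    filter_upwards with s hs
    rw [uIoc_of_le ht.1] at hs
    have hmem : s ∈ Set.Ioc (0:ℝ) T := ⟨hs.1, hs.2.trans ht.2⟩
    show (Ioc (0:ℝ) T).indicator w s = w s
    simp [Set.indicator_of_mem hmem]
  have huw : ∀ a b : ℝ, IntervalIntegrable (fun s => u s * w' s) volume a b := fun a b =>
    (hw'ii a b).continuousOn_mul (hucont.continuousOn : ContinuousOn u (Set.uIcc a b))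
  set Φ : ℝ → ℝ := fun t => u t * W t - ∫ s in (0:ℝ)..t, u s * w' s with hΦdef
  have key : ∀ t, HasDerivAt Φ (u' t * W t) t := by
    intro t
    have hstrict : HasStrictDerivAt u (u' t) t :=
      hasStrictDerivAt_of_hasDerivAt_of_continuousAt (Eventually.of_forall hu) hu'.continuousAt
    obtain ⟨K, sl, hsl, hK⟩ := HasStrictFDerivAt.exists_lipschitzOnWith hstrict
    rw [hasDerivAt_iff_isLittleO]
    have decomp : ∀ y, Φ y - Φ t - (y - t) * (u' t * W t) =
        (u y - u t - (y - t) * u' t) * W t + (u y - u t) * (W y - W t)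
          - ∫ s in t..y, (u s - u t) * w' s := by
      intro y
      have h1 : (∫ s in (0:ℝ)..y, u s * w' s) - ∫ s in (0:ℝ)..t, u s * w' s
          = ∫ s in t..y, u s * w' s := integral_interval_sub_left (huw 0 y) (huw 0 t)
      have h2 : W y - W t = ∫ s in t..y, w' s := integral_interval_sub_left (hw'ii 0 y) (hw'ii 0 t)
      have h3 : ∫ s in t..y, (u s - u t) * w' s
          = (∫ s in t..y, u s * w' s) - u t * ∫ s in t..y, w' s := by
        rw [← intervalIntegral.integral_const_mul, ← integral_sub (huw t y) ((hw'ii t y).const_mul _)]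
        apply integral_congr; intro s _; ring
      simp only [Φ]
      rw [h3, ← h2, ← h1]; ring
    have T1 : (fun y => (u y - u t - (y - t) * u' t) * W t) =o[nhds t] fun y => y - t := by
      have := hasDerivAt_iff_isLittleO.mp (hu t)
      simp only [smul_eq_mul] at this
      simpa using this.mul_isBigO (isBigO_const_const (W t) (one_ne_zero) (nhds t))
    have T2 : (fun y => (u y - u t) * (W y - W t)) =o[nhds t] fun y => y - t := by
      have hO : (fun y => u y - u t) =O[nhds t] fun y => y - t := (hu t).isBigO_sub
      have ho : (fun y => W y - W t) =o[nhds t] (fun _ => (1:ℝ)) := by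
        rw [isLittleO_one_iff]
        have : ContinuousAt (fun y => W y - W t) t := hWc.continuousAt.sub continuousAt_const
        simpa using this.tendsto
      simpa using hO.mul_isLittleO ho
    have T3 : (fun y => ∫ s in t..y, (u s - u t) * w' s) =o[nhds t] fun y => y - t := by
      rw [isLittleO_iff]
      intro c hc
      obtain ⟨δ, hδ, hball⟩ := Metric.mem_nhds_iff.mp hsl
      set G : ℝ → ℝ := fun y => ∫ s in t..y, ‖w' s‖ with hGdef
      have hGc : Continuous G := intervalIntegral.continuous_primitive
        (fun a b => hw'int.norm.intervalIntegrable) t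
      have hGt : G t = 0 := integral_same
      have hev1 : ∀ᶠ y in nhds t, |G y| < c / (K + 1) := by
        have h0 : Tendsto G (nhds t) (nhds 0) := by rw [← hGt]; exact hGc.continuousAt
        have hpos : 0 < c / ((K : ℝ) + 1) := by positivity
        have := h0.eventually (eventually_abs_sub_lt 0 hpos)
        simpa using this
      have hev2 : ∀ᶠ y in nhds t, y ∈ Metric.ball t δ := Metric.ball_mem_nhds t hδ
      filter_upwards [hev1, hev2] with y hy1 hy2
      have hGy : ∫ s in Set.uIoc t y, ‖w' s‖ = |G y| := by
        rcases le_total t y with h | h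
        · rw [uIoc_of_le h]
          have : G y = ∫ s in Ioc t y, ‖w' s‖ := integral_of_le h
          rw [this, abs_of_nonneg]
          exact setIntegral_nonneg measurableSet_Ioc fun s _ => norm_nonneg _
        · rw [uIoc_of_ge h]
          have : G y = -∫ s in Ioc y t, ‖w' s‖ := by
            rw [hGdef]; simp [integral_of_ge h]
          rw [this, abs_neg, abs_of_nonneg]
          exact setIntegral_nonneg measurableSet_Ioc fun s _ => norm_nonneg _
      have step1 : ‖∫ s in t..y, (u s - u t) * w' s‖
          ≤ ∫ s in Set.uIoc t y, ‖(u s - u t) * w' s‖ := norm_integral_le_integral_norm_uIoc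
      have int1 : IntegrableOn (fun s => ‖(u s - u t) * w' s‖) (Set.uIoc t y) volume := by
        have : IntervalIntegrable (fun s => (u s - u t) * w' s) volume t y :=
          (hw'ii t y).continuousOn_mul
            (((hucont.sub continuous_const).continuousOn) :
              ContinuousOn (fun s => u s - u t) (Set.uIcc t y))
        exact intervalIntegrable_iff.mp this.norm
      have int2 : IntegrableOn (fun s => (K : ℝ) * |y - t| * ‖w' s‖) (Set.uIoc t y) volume :=
        (hw'int.norm.const_mul _).integrableOn
      have step2 : ∫ s in Set.uIoc t y, ‖(u s - u t) * w' s‖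
          ≤ ∫ s in Set.uIoc t y, (K : ℝ) * |y - t| * ‖w' s‖ := by
        apply setIntegral_mono_on int1 int2 measurableSet_uIoc
        intro s hs
        have hst : |s - t| ≤ |y - t| := by
          rcases le_total t y with h | h
          · rw [uIoc_of_le h] at hs
            rw [abs_of_nonneg (by linarith [hs.1.le] : (0:ℝ) ≤ s - t),
              abs_of_nonneg (by linarith : (0:ℝ) ≤ y - t)]
            linarith [hs.2]
          · rw [uIoc_of_ge h] at hs
            rw [abs_of_nonpos (by linarith [hs.2] : s - t ≤ 0),
              abs_of_nonpos (by linarith : y - t ≤ 0)]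
            linarith [hs.1.le]
        have hsmem : s ∈ sl := by
          apply hball
          have : |s - t| < δ := lt_of_le_of_lt hst (by simpa [Metric.mem_ball, Real.dist_eq] using hy2)
          simpa [Metric.mem_ball, Real.dist_eq] using this
        have htmem : t ∈ sl := hball (Metric.mem_ball_self hδ)
        have hlip : |u s - u t| ≤ (K : ℝ) * |s - t| := by
          have := hK.dist_le_mul s hsmem t htmem
          simpa [Real.dist_eq] using this
        rw [norm_mul]
        apply mul_le_mul_of_nonneg_right _ (norm_nonneg _)
        calc ‖u s - u t‖ = |u s - u t| := rfl
          _ ≤ (K : ℝ) * |s - t| := hlip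
          _ ≤ (K : ℝ) * |y - t| := mul_le_mul_of_nonneg_left hst K.coe_nonneg
      have step3 : ∫ s in Set.uIoc t y, (K : ℝ) * |y - t| * ‖w' s‖
          = (K : ℝ) * |y - t| * |G y| := by rw [MeasureTheory.integral_const_mul, hGy]
      calc ‖∫ s in t..y, (u s - u t) * w' s‖
          ≤ (K : ℝ) * |y - t| * |G y| := by
            rw [← step3]; exact step1.trans step2
        _ ≤ (K : ℝ) * |y - t| * (c / (K + 1)) := by
            apply mul_le_mul_of_nonneg_left hy1.le (by positivity)
        _ ≤ c * ‖y - t‖ := by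
            rw [Real.norm_eq_abs]
            rw [div_eq_mul_inv]
            have h1 : (K : ℝ) * ((K:ℝ)+1)⁻¹ ≤ 1 := by
              rw [← div_eq_mul_inv, div_le_one (by positivity)]; linarith [K.coe_nonneg]
            nlinarith [abs_nonneg (y - t), K.coe_nonneg, hc.le, mul_le_mul_of_nonneg_right h1 hc.le, abs_nonneg (y-t)]
    have main := (T1.add T2).sub T3
    apply main.congr' _ EventuallyEq.rfl
    filter_upwards with y
    rw [smul_eq_mul, decomp y]
  have hint : IntervalIntegrable (fun t => u' t * W t) volume 0 T :=
    (hu'.mul hWc).intervalIntegrable 0 T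
  have hFTC := integral_eq_sub_of_hasDerivAt (fun t _ => key t) hint
  have hΦT : Φ T = u T * W T - ∫ s in (0:ℝ)..T, u s * w' s := rfl
  have hΦ0 : Φ 0 = 0 := by simp [Φ, W]
  have e1 : ∫ s in (0:ℝ)..T, u s * w' s = ∫ s in (0:ℝ)..T, u s * w s := by
    apply intervalIntegral.integral_congr_ae
    filter_upwards with s hs
    rw [uIoc_of_le hT] at hs
    show u s * (Ioc (0:ℝ) T).indicator w s = u s * w s
    simp [Set.indicator_of_mem hs]
  have e2 : W T = ∫ s in (0:ℝ)..T, w s := hWrw T ⟨hT, le_refl T⟩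
  have e3 : ∫ t in (0:ℝ)..T, u' t * W t
      = ∫ t in (0:ℝ)..T, u' t * (∫ s in (0:ℝ)..t, w s) := by
    apply integral_congr
    intro t ht
    rw [uIcc_of_le hT] at ht
    show u' t * W t = u' t * ∫ s in (0:ℝ)..t, w s
    rw [hWrw t ht]
  rw [hΦT, hΦ0, e1, e2, e3] at hFTC
  linarith [hFTC]

lemma scalar_ibp4 {T : ℝ} (hT : 0 ≤ T)
    {p p1 p2 p3 pv q q1 q2 q3 qv : ℝ → ℝ}
    (hp : ∀ t, HasDerivAt p (p1 t) t) (hp1 : ∀ t, HasDerivAt p1 (p2 t) t)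
    (hp2 : ∀ t, HasDerivAt p2 (p3 t) t)
    (hp3c : ContinuousOn p3 (Icc 0 T)) (hpv : IntervalIntegrable pv volume 0 T)
    (hp3 : ∀ t ∈ Icc (0:ℝ) T, p3 t = p3 0 + ∫ s in (0:ℝ)..t, pv s)
    (hq : ∀ t, HasDerivAt q (q1 t) t) (hq1 : ∀ t, HasDerivAt q1 (q2 t) t)
    (hq2 : ∀ t, HasDerivAt q2 (q3 t) t)
    (hq3c : ContinuousOn q3 (Icc 0 T)) (hqv : IntervalIntegrable qv volume 0 T)
    (hq3 : ∀ t ∈ Icc (0:ℝ) T, q3 t = q3 0 + ∫ s in (0:ℝ)..t, qv s) :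
    ∫ t in (0:ℝ)..T, (p t * qv t - pv t * q t)
      = (p T * q3 T - p1 T * q2 T + p2 T * q1 T - p3 T * q T)
        - (p 0 * q3 0 - p1 0 * q2 0 + p2 0 * q1 0 - p3 0 * q 0) := by
  have huIcc : uIcc (0:ℝ) T = Icc 0 T := uIcc_of_le hT
  have hpc : Continuous p := Differentiable.continuous (fun t => (hp t).differentiableAt)
  have hp1c : Continuous p1 := Differentiable.continuous (fun t => (hp1 t).differentiableAt)
  have hp2c : Continuous p2 := Differentiable.continuous (fun t => (hp2 t).differentiableAt)
  have hqc : Continuous q := Differentiable.continuous (fun t => (hq t).differentiableAt)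
  have hq1c : Continuous q1 := Differentiable.continuous (fun t => (hq1 t).differentiableAt)
  have hq2c : Continuous q2 := Differentiable.continuous (fun t => (hq2 t).differentiableAt)
  have hp3i : IntervalIntegrable p3 volume 0 T := by
    apply ContinuousOn.intervalIntegrable; rwa [huIcc]
  have hq3i : IntervalIntegrable q3 volume 0 T := by
    apply ContinuousOn.intervalIntegrable; rwa [huIcc]
  have hq3T : ∫ s in (0:ℝ)..T, qv s = q3 T - q3 0 := by
    have := hq3 T ⟨hT, le_refl T⟩; linarith
  have hp3T : ∫ s in (0:ℝ)..T, pv s = p3 T - p3 0 := by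
    have := hp3 T ⟨hT, le_refl T⟩; linarith
  have hintp1 : ∫ t in (0:ℝ)..T, p1 t = p T - p 0 :=
    integral_eq_sub_of_hasDerivAt (fun t _ => hp t) (hp1c.intervalIntegrable 0 T)
  have hintq1 : ∫ t in (0:ℝ)..T, q1 t = q T - q 0 :=
    integral_eq_sub_of_hasDerivAt (fun t _ => hq t) (hq1c.intervalIntegrable 0 T)
  have hp1q3i : IntervalIntegrable (fun t => p1 t * q3 t) volume 0 T :=
    hq3i.continuousOn_mul (hp1c.continuousOn : ContinuousOn p1 (uIcc 0 T))
  have hq1p3i : IntervalIntegrable (fun t => q1 t * p3 t) volume 0 T :=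
    hp3i.continuousOn_mul (hq1c.continuousOn : ContinuousOn q1 (uIcc 0 T))
  -- step A
  have hA0 := prim_ibp hT hp hp1c hqv
  have hA1 : ∫ t in (0:ℝ)..T, p1 t * (∫ s in (0:ℝ)..t, qv s)
      = ∫ t in (0:ℝ)..T, (p1 t * q3 t - q3 0 * p1 t) := by
    apply integral_congr
    intro t ht
    rw [huIcc] at ht
    show p1 t * (∫ s in (0:ℝ)..t, qv s) = p1 t * q3 t - q3 0 * p1 t
    have := hq3 t ht
    have h : ∫ s in (0:ℝ)..t, qv s = q3 t - q3 0 := by linarith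
    rw [h]; ring
  have hA2 : ∫ t in (0:ℝ)..T, (p1 t * q3 t - q3 0 * p1 t)
      = (∫ t in (0:ℝ)..T, p1 t * q3 t) - q3 0 * (p T - p 0) := by
    rw [integral_sub hp1q3i ((hp1c.intervalIntegrable 0 T).const_mul _),
      intervalIntegral.integral_const_mul, hintp1]
  have hA : ∫ t in (0:ℝ)..T, p t * qv t
      = p T * q3 T - p 0 * q3 0 - ∫ t in (0:ℝ)..T, p1 t * q3 t := by
    rw [hA0, hq3T, hA1, hA2]; ring
  -- step B
  have hB0 := prim_ibp hT hq hq1c hpv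
  have hB1 : ∫ t in (0:ℝ)..T, q1 t * (∫ s in (0:ℝ)..t, pv s)
      = ∫ t in (0:ℝ)..T, (q1 t * p3 t - p3 0 * q1 t) := by
    apply integral_congr
    intro t ht
    rw [huIcc] at ht
    show q1 t * (∫ s in (0:ℝ)..t, pv s) = q1 t * p3 t - p3 0 * q1 t
    have := hp3 t ht
    have h : ∫ s in (0:ℝ)..t, pv s = p3 t - p3 0 := by linarith
    rw [h]; ring
  have hB2 : ∫ t in (0:ℝ)..T, (q1 t * p3 t - p3 0 * q1 t)
      = (∫ t in (0:ℝ)..T, q1 t * p3 t) - p3 0 * (q T - q 0) := by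
    rw [integral_sub hq1p3i ((hq1c.intervalIntegrable 0 T).const_mul _),
      intervalIntegral.integral_const_mul, hintq1]
  have hB : ∫ t in (0:ℝ)..T, q t * pv t
      = q T * p3 T - q 0 * p3 0 - ∫ t in (0:ℝ)..T, q1 t * p3 t := by
    rw [hB0, hp3T, hB1, hB2]; ring
  -- step C
  have hC0 : ∫ t in (0:ℝ)..T, (p2 t * q2 t + p1 t * q3 t)
      = p1 T * q2 T - p1 0 * q2 0 :=
    integral_deriv_mul_eq_sub_of_hasDerivAt
      (hp1c.continuousOn) (hq2c.continuousOn)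
      (fun t _ => hp1 t) (fun t _ => hq2 t)
      (hp2c.intervalIntegrable 0 T) hq3i
  have hp2q2i : IntervalIntegrable (fun t => p2 t * q2 t) volume 0 T :=
    (hp2c.mul hq2c).intervalIntegrable 0 T
  have hC : ∫ t in (0:ℝ)..T, p1 t * q3 t
      = p1 T * q2 T - p1 0 * q2 0 - ∫ t in (0:ℝ)..T, p2 t * q2 t := by
    rw [integral_add hp2q2i hp1q3i] at hC0; linarith
  -- step D
  have hD0 : ∫ t in (0:ℝ)..T, (q2 t * p2 t + q1 t * p3 t)
      = q1 T * p2 T - q1 0 * p2 0 :=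
    integral_deriv_mul_eq_sub_of_hasDerivAt
      (hq1c.continuousOn) (hp2c.continuousOn)
      (fun t _ => hq1 t) (fun t _ => hp2 t)
      (hq2c.intervalIntegrable 0 T) hp3i
  have hq2p2i : IntervalIntegrable (fun t => q2 t * p2 t) volume 0 T :=
    (hq2c.mul hp2c).intervalIntegrable 0 T
  have hD : ∫ t in (0:ℝ)..T, q1 t * p3 t
      = q1 T * p2 T - q1 0 * p2 0 - ∫ t in (0:ℝ)..T, q2 t * p2 t := by
    rw [integral_add hq2p2i hq1p3i] at hD0; linarith
  have hqp2 : ∫ t in (0:ℝ)..T, q2 t * p2 t = ∫ t in (0:ℝ)..T, p2 t * q2 t := by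
    apply integral_congr; intro t _; exact mul_comm _ _
  -- assemble LHS
  have hpqvi : IntervalIntegrable (fun t => p t * qv t) volume 0 T :=
    hqv.continuousOn_mul (hpc.continuousOn : ContinuousOn p (uIcc 0 T))
  have hpvqi : IntervalIntegrable (fun t => pv t * q t) volume 0 T :=
    hpv.mul_continuousOn (hqc.continuousOn : ContinuousOn q (uIcc 0 T))
  have hsplit : ∫ t in (0:ℝ)..T, (p t * qv t - pv t * q t)
      = (∫ t in (0:ℝ)..T, p t * qv t) - ∫ t in (0:ℝ)..T, pv t * q t :=
    integral_sub hpqvi hpvqi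
  have hcomm : ∫ t in (0:ℝ)..T, pv t * q t = ∫ t in (0:ℝ)..T, q t * pv t := by
    apply integral_congr; intro t _; exact mul_comm _ _
  rw [hsplit, hcomm, hA, hB, hC, hD, hqp2]
  ring

lemma components {n : ℕ} {T : ℝ} (hT : 0 ≤ T) {x v : ℝ → (Fin n → ℝ)}
    (hdiff : ∀ j < 3, Differentiable ℝ (iteratedDeriv j x))
    (hvint : IntervalIntegrable v volume 0 T)
    (hx3 : ∀ t ∈ Icc (0:ℝ) T,
      iteratedDeriv 3 x t = iteratedDeriv 3 x 0 + ∫ s in (0:ℝ)..t, v s) (i : Fin n) :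
    (∀ t, HasDerivAt (fun t => x t i) (iteratedDeriv 1 x t i) t) ∧
    (∀ t, HasDerivAt (fun t => iteratedDeriv 1 x t i) (iteratedDeriv 2 x t i) t) ∧
    (∀ t, HasDerivAt (fun t => iteratedDeriv 2 x t i) (iteratedDeriv 3 x t i) t) ∧
    ContinuousOn (fun t => iteratedDeriv 3 x t i) (Icc 0 T) ∧
    IntervalIntegrable (fun t => v t i) volume 0 T ∧
    (∀ t ∈ Icc (0:ℝ) T,
      iteratedDeriv 3 x t i = iteratedDeriv 3 x 0 i + ∫ s in (0:ℝ)..t, v s i) := by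
  have d0 : ∀ t, HasDerivAt x (iteratedDeriv 1 x t) t := by
    intro t
    have h := ((hdiff 0 (by norm_num)) t).hasDerivAt
    simp only [iteratedDeriv_zero] at h
    rw [iteratedDeriv_one]
    exact h
  have d1 : ∀ t, HasDerivAt (iteratedDeriv 1 x) (iteratedDeriv 2 x t) t := by
    intro t
    have h := ((hdiff 1 (by norm_num)) t).hasDerivAt
    have e : iteratedDeriv 2 x t = deriv (iteratedDeriv 1 x) t := by
      rw [iteratedDeriv_succ]
    rw [e]
    exact h
  have d2 : ∀ t, HasDerivAt (iteratedDeriv 2 x) (iteratedDeriv 3 x t) t := by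
    intro t
    have h := ((hdiff 2 (by norm_num)) t).hasDerivAt
    have e : iteratedDeriv 3 x t = deriv (iteratedDeriv 2 x) t := by
      rw [iteratedDeriv_succ]
    rw [e]
    exact h
  have hvI : IntegrableOn v (uIcc 0 T) volume := by
    rw [uIcc_of_le hT, integrableOn_Icc_iff_integrableOn_Ioc]
    exact hvint.1
  have hprim : ContinuousOn (fun t => ∫ s in (0:ℝ)..t, v s) (Icc 0 T) := by
    have := continuousOn_primitive_interval hvI
    rwa [uIcc_of_le hT] at this
  have hx3c : ContinuousOn (iteratedDeriv 3 x) (Icc 0 T) :=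
    (continuousOn_const.add hprim).congr (fun t ht => hx3 t ht)
  refine ⟨fun t => hasDerivAt_pi.mp (d0 t) i, fun t => hasDerivAt_pi.mp (d1 t) i,
    fun t => hasDerivAt_pi.mp (d2 t) i,
    (continuous_apply i).comp_continuousOn hx3c,
    ⟨(ContinuousLinearMap.proj (R:=ℝ) (φ:=fun _ : Fin n => ℝ) i).integrable_comp hvint.1,
     (ContinuousLinearMap.proj (R:=ℝ) (φ:=fun _ : Fin n => ℝ) i).integrable_comp hvint.2⟩, ?_⟩
  intro t ht
  have h := congrFun (hx3 t ht) i
  rw [h]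
  have hsub : uIcc (0:ℝ) t ⊆ uIcc (0:ℝ) T := by
    rw [uIcc_of_le hT, uIcc_of_le ht.1]
    exact Icc_subset_Icc (le_refl 0) ht.2
  have hcc := (ContinuousLinearMap.proj (R := ℝ) (φ := fun _ : Fin n => ℝ)
      i).intervalIntegral_comp_comm (hvint.mono_set hsub)
  simp only [ContinuousLinearMap.proj_apply] at hcc
  have hieq : (∫ s in (0:ℝ)..t, v s) i = ∫ s in (0:ℝ)..t, v s i := hcc.symm
  simp [Pi.add_apply, hieq]

lemma dot_transpose {n m : ℕ} (M : Matrix (Fin m) (Fin n) ℝ) (a : Fin n → ℝ) (c : Fin m → ℝ) :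
    a ⬝ᵥ (Mᵀ *ᵥ c) = (M *ᵥ a) ⬝ᵥ c := by
  have h1 : (M *ᵥ a) ⬝ᵥ c = c ⬝ᵥ (M *ᵥ a) := dotProduct_comm _ _
  have h2 : c ⬝ᵥ (M *ᵥ a) = (c ᵥ* M) ⬝ᵥ a := Matrix.dotProduct_mulVec _ _ _
  have h3 : Mᵀ *ᵥ c = c ᵥ* M := Matrix.mulVec_transpose _ _
  rw [h3, dotProduct_comm, ← h2, h1]

set_option maxHeartbeats 1000000 in
/-- Weak duality between the fourth-order polyhedral problem (PFC) and its
dual (PFC*). -/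
theorem weak_duality_PFC
    (n m : ℕ) (hn : 1 ≤ n) (hm : 1 ≤ m) (T : ℝ) (hT : 0 < T)
    (A E : Matrix (Fin m) (Fin n) ℝ) (d : Fin m → ℝ)
    (S : Set ((Fin n → ℝ) × (Fin n → ℝ)))
    (X : ℝ → Set (Fin n → ℝ))
    (f : (Fin n → ℝ) → (Fin n → ℝ) → ℝ)
    (x v : ℝ → (Fin n → ℝ))
    (hfeas : IsFeasiblePFC n m T A E d S X x v)
    -- the dual variable λ ≥ 0 and the arc η = Eᵀλ with η⁽⁴⁾ represented by ζ
    (l : ℝ → (Fin m → ℝ))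
    (hl : ∀ᵐ t ∂volume, t ∈ Icc (0:ℝ) T → 0 ≤ l t)
    (hdl : IntervalIntegrable (fun t => d ⬝ᵥ l t) volume 0 T)
    (η : ℝ → (Fin n → ℝ))
    (hηdef : ∀ t, η t = Eᵀ *ᵥ l t)
    (hηdiff : ∀ j < 3, Differentiable ℝ (iteratedDeriv j η))
    (ζ : ℝ → (Fin n → ℝ))
    (hζ : IntervalIntegrable ζ volume 0 T)
    (hη : ∀ t ∈ Icc (0:ℝ) T,
      iteratedDeriv 3 η t = iteratedDeriv 3 η 0 + ∫ s in (0:ℝ)..t, ζ s)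
    (μ₀ μ₁ : Fin n → ℝ)
    (ω : ℝ → ℝ) (hωint : IntervalIntegrable ω volume 0 T)
    (cf cS cS0 cS1 cS2 : ℝ)
    (hω : ∀ᵐ t ∂volume, t ∈ Icc (0:ℝ) T → ∀ ξ ∈ X t, ξ ⬝ᵥ (ζ t - Aᵀ *ᵥ l t) ≤ ω t)
    (hcf : ∀ y₀ y₁ : Fin n → ℝ,
      y₀ ⬝ᵥ (iteratedDeriv 3 η 0 + μ₀) + y₁ ⬝ᵥ (μ₁ - iteratedDeriv 3 η T)
        - f y₀ y₁ ≤ cf)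
    (hcS : ∀ s ∈ S, -(s.1 ⬝ᵥ μ₀) - s.2 ⬝ᵥ μ₁ ≤ cS)
    (hcS0 : ∀ s ∈ S, s.1 ⬝ᵥ ((-1:ℝ)^(1:ℕ) • iteratedDeriv 0 η 0)
        + s.2 ⬝ᵥ ((-1:ℝ)^(0:ℕ) • iteratedDeriv 0 η T) ≤ cS0)
    (hcS1 : ∀ s ∈ S, s.1 ⬝ᵥ ((-1:ℝ)^(2:ℕ) • iteratedDeriv 1 η 0)
        + s.2 ⬝ᵥ ((-1:ℝ)^(1:ℕ) • iteratedDeriv 1 η T) ≤ cS1)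
    (hcS2 : ∀ s ∈ S, s.1 ⬝ᵥ ((-1:ℝ)^(3:ℕ) • iteratedDeriv 2 η 0)
        + s.2 ⬝ᵥ ((-1:ℝ)^(2:ℕ) • iteratedDeriv 2 η T) ≤ cS2) :
    -cf - (∫ t in (0:ℝ)..T, d ⬝ᵥ l t) - (∫ t in (0:ℝ)..T, ω t)
      - cS - cS0 - cS1 - cS2 ≤ f (x 0) (x T) := by
  obtain ⟨hxdiff, hvint, hx3, hAx, hS, hX⟩ := hfeas
  have hT' : (0:ℝ) ≤ T := hT.le
  have CX := fun i => components hT' hxdiff hvint hx3 i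
  have CH := fun i => components hT' hηdiff hζ hη i
  -- pointwise IBP identity for each coordinate
  have key : ∀ i : Fin n,
      ∫ t in (0:ℝ)..T, (x t i * ζ t i - v t i * η t i)
        = (x T i * iteratedDeriv 3 η T i - iteratedDeriv 1 x T i * iteratedDeriv 2 η T i
            + iteratedDeriv 2 x T i * iteratedDeriv 1 η T i - iteratedDeriv 3 x T i * η T i)
          - (x 0 i * iteratedDeriv 3 η 0 i - iteratedDeriv 1 x 0 i * iteratedDeriv 2 η 0 i
            + iteratedDeriv 2 x 0 i * iteratedDeriv 1 η 0 i - iteratedDeriv 3 x 0 i * η 0 i) := by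
    intro i
    obtain ⟨p0, p1, p2, p3c, pvi, p3⟩ := CX i
    obtain ⟨q0, q1, q2, q3c, qvi, q3⟩ := CH i
    exact scalar_ibp4 hT' p0 p1 p2 p3c pvi p3 q0 q1 q2 q3c qvi q3
  -- integrability of each coordinate integrand
  have hxc : ∀ i, Continuous (fun t => x t i) := fun i =>
    Differentiable.continuous (fun t => ((CX i).1 t).differentiableAt)
  have hηc : ∀ i, Continuous (fun t => η t i) := fun i =>
    Differentiable.continuous (fun t => ((CH i).1 t).differentiableAt)
  have intg : ∀ i : Fin n,
      IntervalIntegrable (fun t => x t i * ζ t i - v t i * η t i) volume 0 T := by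
    intro i
    have h1 : IntervalIntegrable (fun t => x t i * ζ t i) volume 0 T :=
      ((CH i).2.2.2.2.1).continuousOn_mul
        ((hxc i).continuousOn : ContinuousOn (fun t => x t i) (uIcc 0 T))
    have h2 : IntervalIntegrable (fun t => v t i * η t i) volume 0 T :=
      ((CX i).2.2.2.2.1).mul_continuousOn
        ((hηc i).continuousOn : ContinuousOn (fun t => η t i) (uIcc 0 T))
    exact h1.sub h2
  -- summed identity
  have sum_key : ∫ t in (0:ℝ)..T, (x t ⬝ᵥ ζ t - v t ⬝ᵥ η t)
      = (x T ⬝ᵥ iteratedDeriv 3 η T - iteratedDeriv 1 x T ⬝ᵥ iteratedDeriv 2 η T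
          + iteratedDeriv 2 x T ⬝ᵥ iteratedDeriv 1 η T - iteratedDeriv 3 x T ⬝ᵥ η T)
        - (x 0 ⬝ᵥ iteratedDeriv 3 η 0 - iteratedDeriv 1 x 0 ⬝ᵥ iteratedDeriv 2 η 0
          + iteratedDeriv 2 x 0 ⬝ᵥ iteratedDeriv 1 η 0 - iteratedDeriv 3 x 0 ⬝ᵥ η 0) := by
    have e1 : ∫ t in (0:ℝ)..T, (x t ⬝ᵥ ζ t - v t ⬝ᵥ η t)
        = ∫ t in (0:ℝ)..T, (∑ i : Fin n, (x t i * ζ t i - v t i * η t i)) := by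
      apply integral_congr
      intro t _
      simp [dotProduct, Finset.sum_sub_distrib]
    rw [e1, intervalIntegral.integral_finset_sum (fun i _ => intg i)]
    rw [Finset.sum_congr rfl (fun i _ => key i)]
    simp [dotProduct, Finset.sum_sub_distrib, Finset.sum_add_distrib]
  -- integrability of the dot integrand
  have int_lhs : IntervalIntegrable (fun t => x t ⬝ᵥ ζ t - v t ⬝ᵥ η t) volume 0 T := by
    have he : (fun t => x t ⬝ᵥ ζ t - v t ⬝ᵥ η t)
        = fun t => ∑ i : Fin n, (x t i * ζ t i - v t i * η t i) := by
      funext t; simp [dotProduct, Finset.sum_sub_distrib]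
    rw [he]
    have hsum := IntervalIntegrable.sum (μ := volume) (a := (0:ℝ)) (b := T) Finset.univ
      (f := fun i (t : ℝ) => x t i * ζ t i - v t i * η t i)
      (fun i _ => intg i)
    have he2 : (∑ i ∈ Finset.univ, fun (t:ℝ) => x t i * ζ t i - v t i * η t i)
        = fun t => ∑ i : Fin n, (x t i * ζ t i - v t i * η t i) := by
      funext t; simp
    rwa [he2] at hsum
  -- the inequality step
  have hmono : (∫ t in (0:ℝ)..T, (x t ⬝ᵥ ζ t - v t ⬝ᵥ η t))
      ≤ ∫ t in (0:ℝ)..T, (d ⬝ᵥ l t + ω t) := by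
    apply integral_mono_ae_restrict hT' int_lhs (hdl.add hωint)
    have h1 : ∀ᵐ t ∂(volume.restrict (Icc (0:ℝ) T)), t ∈ Icc (0:ℝ) T → 0 ≤ l t :=
      ae_restrict_of_ae hl
    have h2 : ∀ᵐ t ∂(volume.restrict (Icc (0:ℝ) T)),
        t ∈ Icc (0:ℝ) T → A *ᵥ x t - E *ᵥ v t ≤ d := ae_restrict_of_ae hAx
    have h3 : ∀ᵐ t ∂(volume.restrict (Icc (0:ℝ) T)),
        t ∈ Icc (0:ℝ) T → ∀ ξ ∈ X t, ξ ⬝ᵥ (ζ t - Aᵀ *ᵥ l t) ≤ ω t := ae_restrict_of_ae hω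
    have hmem : ∀ᵐ t ∂(volume.restrict (Icc (0:ℝ) T)), t ∈ Icc (0:ℝ) T :=
      ae_restrict_mem measurableSet_Icc
    filter_upwards [h1, h2, h3, hmem] with t h1t h2t h3t ht
    have e : x t ⬝ᵥ ζ t - v t ⬝ᵥ η t
        = x t ⬝ᵥ (ζ t - Aᵀ *ᵥ l t) + (A *ᵥ x t - E *ᵥ v t) ⬝ᵥ l t := by
      rw [hηdef t, dotProduct_sub, sub_dotProduct,
        dot_transpose A (x t) (l t), dot_transpose E (v t) (l t)]
      ring
    have b1 : x t ⬝ᵥ (ζ t - Aᵀ *ᵥ l t) ≤ ω t := h3t ht (x t) (hX t ht)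
    have b2 : (A *ᵥ x t - E *ᵥ v t) ⬝ᵥ l t ≤ d ⬝ᵥ l t := by
      apply Finset.sum_le_sum
      intro j _
      exact mul_le_mul_of_nonneg_right (h2t ht j) (h1t ht j)
    rw [e]
    linarith
  rw [intervalIntegral.integral_add hdl hωint] at hmono
  rw [sum_key] at hmono
  -- boundary terms
  have m0 : (x 0, x T) ∈ S := by
    have := hS 0 (by norm_num)
    simpa [iteratedDeriv_zero] using this
  have m1 := hS 1 (by norm_num)
  have m2 := hS 2 (by norm_num)
  have m3 := hS 3 (by norm_num)
  have i_cf := hcf (x 0) (x T)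
  rw [dotProduct_add, dotProduct_sub] at i_cf
  have i_cS := hcS _ m0
  have i_cS0 := hcS0 _ m3
  have i_cS1 := hcS1 _ m2
  have i_cS2 := hcS2 _ m1
  simp only [iteratedDeriv_zero, pow_zero, pow_one, pow_succ, one_smul, neg_one_mul,
    neg_smul, dotProduct_neg, mul_one, neg_neg, one_mul] at i_cS0 i_cS1 i_cS2
  linarith
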